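/- Let G = N ⋊ S be a semidirect product of a Lie group N with a connected Lie group S whose Lie algebra is perfect. Let (π₁, H) and (π₂, H) be strongly continuous unitary representations of G on the same Hilbert space such that π₁|_N = π₂|_N and π₁|_N is irreducible. Then π₁ = π₂. -/

import Mathlib

noncomputable section
set_option maxHeartbeats 1000000

open Complex Filter Topology

/-! ## Core definitions: unitary representations, energy conditions, the group `N` -/

section Reps

variable {G : Type*} [Group G] [TopologicalSpace G]
variable {H : Type*} [NormedAddCommGroup H] [InnerProductSpace ℂ H]
variable {H' : Type*} [NormedAddCommGroup H'] [InnerProductSpace ℂ H']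

/-- A representation is *strongly continuous* if all orbit maps are continuous. -/
def StronglyContinuous (π : G →* (H ≃ₗᵢ[ℂ] H)) : Prop :=
  ∀ v : H, Continuous fun g => π g v

/-- A (complex) subspace is invariant under a representation. -/
def IsInvariantSubspace (π : G →* (H ≃ₗᵢ[ℂ] H)) (K : Submodule ℂ H) : Prop :=
  ∀ g : G, ∀ v ∈ K, π g v ∈ K

/-- Irreducibility: no nontrivial closed invariant subspaces. -/
def IsIrreducibleRep (π : G →* (H ≃ₗᵢ[ℂ] H)) : Prop :=
  ∀ K : Submodule ℂ H, IsClosed (K : Set H) → IsInvariantSubspace π K → K = ⊥ ∨ K = ⊤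

/-- Unitary equivalence of representations. -/
def AreUnitarilyEquivalent (π : G →* (H ≃ₗᵢ[ℂ] H)) (ρ : G →* (H' ≃ₗᵢ[ℂ] H')) : Prop :=
  ∃ U : H ≃ₗᵢ[ℂ] H', ∀ (g : G) (v : H), U (π g v) = ρ g (U v)

/-- The restriction of an isometry to an invariant subspace (invariant together with
its inverse). -/
def LinearIsometryEquiv.restrictSubmodule (e : H ≃ₗᵢ[ℂ] H) (K : Submodule ℂ H)
    (h1 : ∀ v ∈ K, e v ∈ K) (h2 : ∀ v ∈ K, e.symm v ∈ K) : K ≃ₗᵢ[ℂ] K where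
  toFun v := ⟨e v, h1 v v.2⟩
  invFun v := ⟨e.symm v, h2 v v.2⟩
  left_inv v := by ext; simp
  right_inv v := by ext; simp
  map_add' a b := by ext; simp
  map_smul' c a := by ext; simp
  norm_map' a := by simp

/-- The subrepresentation of `π` on a `π`-invariant subspace `K`. -/
def restrictRep (π : G →* (H ≃ₗᵢ[ℂ] H)) (K : Submodule ℂ H)
    (hK : IsInvariantSubspace π K) : G →* (K ≃ₗᵢ[ℂ] K) where
  toFun g := (π g).restrictSubmodule K (hK g) (by
      intro v hv
      have := hK g⁻¹ v hv
      simpa using this)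
  map_one' := by
    ext v
    simp [LinearIsometryEquiv.restrictSubmodule]
  map_mul' g g' := by
    ext v
    simp [LinearIsometryEquiv.restrictSubmodule]
    rfl

end Reps

section Energy

variable {H : Type*} [NormedAddCommGroup H] [InnerProductSpace ℂ H]

/-- The self-adjoint generator of the strongly continuous unitary one-parameter group `U`
has non-negative spectrum.  This is encoded through the standard characterization by
bounded holomorphic extensions of the orbit maps to the upper half-plane. -/
def HasNonnegativeGenerator (U : ℝ → H → H) : Prop :=
  ∀ v : H, ∃ F : ℂ → H,
    ContinuousOn F {z : ℂ | 0 ≤ z.im} ∧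
    DifferentiableOn ℂ F {z : ℂ | 0 < z.im} ∧
    (∀ t : ℝ, F (t : ℂ) = U t v) ∧
    (∀ z : ℂ, 0 ≤ z.im → ‖F z‖ ≤ ‖v‖)

/-- The self-adjoint generator of the strongly continuous unitary one-parameter group `U`
has strictly positive spectrum, i.e. its spectral measure is supported in `(0,∞)`.
This is encoded through the standard characterization: orbit maps have bounded
holomorphic extensions to the upper half-plane that vanish at `i∞`. -/
def HasStrictlyPositiveGenerator (U : ℝ → H → H) : Prop :=
  ∀ v : H, ∃ F : ℂ → H,
    ContinuousOn F {z : ℂ | 0 ≤ z.im} ∧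
    DifferentiableOn ℂ F {z : ℂ | 0 < z.im} ∧
    (∀ t : ℝ, F (t : ℂ) = U t v) ∧
    (∀ z : ℂ, 0 ≤ z.im → ‖F z‖ ≤ ‖v‖) ∧
    Tendsto (fun y : ℝ => F (y * Complex.I)) atTop (nhds 0)

/-- Strictly negative spectrum of the generator. -/
def HasStrictlyNegativeGenerator (U : ℝ → H → H) : Prop :=
  HasStrictlyPositiveGenerator (fun t => U (-t))

end Energy



/-! ## Statement 10

Let `G = N ⋊ S` be a semidirect product of a Lie group `N` with a connected Lie group `S`
whose Lie algebra is perfect.  If two strongly continuous unitary representations of `G` on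
the same Hilbert space agree on `N` and their common restriction to `N` is irreducible,
then they are equal.

For a connected Lie group `S`, perfectness of the Lie algebra of `S` is equivalent to the
commutator subgroup of `S` being dense in `S`; the latter formulation is used here. -/

section SchurAux
variable {H : Type} [NormedAddCommGroup H] [InnerProductSpace ℂ H] [CompleteSpace H]

def commutantSub (s : Set (H →L[ℂ] H)) (hs : ∀ a ∈ s, star a ∈ s) :
    StarSubalgebra ℂ (H →L[ℂ] H) where
  carrier := {x | ∀ a ∈ s, a * x = x * a}
  mul_mem' {x y} hx hy a ha := by rw [← mul_assoc, hx a ha, mul_assoc, hy a ha, mul_assoc]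
  one_mem' a _ := by simp
  add_mem' {x y} hx hy a ha := by rw [mul_add, add_mul, hx a ha, hy a ha]
  algebraMap_mem' c a _ := by simp [Algebra.algebraMap_eq_smul_one]
  star_mem' {x} hx a ha := by
    have := congrArg star (hx (star a) (hs a ha))
    simpa [star_mul, mul_comm] using this.symm

lemma isClosed_commutantSub (s : Set (H →L[ℂ] H)) (hs : ∀ a ∈ s, star a ∈ s) :
    IsClosed ((commutantSub s hs : Set (H →L[ℂ] H))) := by
  have : (commutantSub s hs : Set (H →L[ℂ] H)) = ⋂ a ∈ s, {x | a * x = x * a} := by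
    ext x
    simp only [Set.mem_iInter, SetLike.mem_coe]
    exact ⟨fun h a ha => h a ha, fun h a ha => h a ha⟩
  rw [this]
  refine isClosed_biInter fun a _ => ?_
  exact isClosed_eq (by fun_prop) (by fun_prop)

lemma cfc_mem_elemental' (T : H →L[ℂ] H) [IsStarNormal T] (f : ℂ → ℂ) :
    cfc f T ∈ StarAlgebra.elemental ℂ T := by
  refine cfc_cases (· ∈ StarAlgebra.elemental ℂ T) T f (zero_mem _) fun hf ha => ?_
  rw [cfcHom_eq_of_isStarNormal]
  exact Subtype.coe_prop _

lemma star_isometryCLM (e : H ≃ₗᵢ[ℂ] H) :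
    star (e.toContinuousLinearEquiv : H →L[ℂ] H)
      = (e.symm.toContinuousLinearEquiv : H →L[ℂ] H) := by
  rw [ContinuousLinearMap.star_eq_adjoint]
  symm
  rw [ContinuousLinearMap.eq_adjoint_iff]
  intro x y
  simp only [ContinuousLinearEquiv.coe_coe, LinearIsometryEquiv.coe_toContinuousLinearEquiv]
  rw [← e.inner_map_map (e.symm x) y, e.apply_symm_apply]

lemma schur {G : Type*} [Group G] [TopologicalSpace G] (π : G →* (H ≃ₗᵢ[ℂ] H)) (hirr : IsIrreducibleRep π)
    (T : H ≃ₗᵢ[ℂ] H) (hT : ∀ g v, T (π g v) = π g (T v)) :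
    ∃ c : ℂ, ∀ v, T v = c • v := by
  rcases subsingleton_or_nontrivial H with hsub | hnt
  · exact ⟨0, fun v => Subsingleton.elim _ _⟩
  set W : G → (H →L[ℂ] H) := fun g => ((π g).toContinuousLinearEquiv : H →L[ℂ] H) with hW
  have hWapp : ∀ g v, W g v = π g v := fun g v => rfl
  set s : Set (H →L[ℂ] H) := Set.range W with hs
  have hstar : ∀ a ∈ s, star a ∈ s := by
    rintro a ⟨g, rfl⟩
    refine ⟨g⁻¹, ?_⟩
    rw [hW]
    simp only
    rw [star_isometryCLM]
    congr 1
    rw [map_inv]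
    rfl
  set T' : H →L[ℂ] H := (T.toContinuousLinearEquiv : H →L[ℂ] H) with hT'
  have hT'app : ∀ v, T' v = T v := fun v => rfl
  have hTstar : star T' * T' = 1 ∧ T' * star T' = 1 := by
    rw [hT', star_isometryCLM]
    constructor <;> ext v <;> simp
  haveI : IsStarNormal T' := ⟨by rw [Commute, SemiconjBy, hTstar.1, hTstar.2]⟩
  have hTmem : T' ∈ commutantSub s hstar := by
    rintro a ⟨g, rfl⟩
    ext v
    simpa [hWapp, hT'app] using (hT g v).symm
  have hcomm : ∀ f : ℂ → ℂ, ∀ g : G, W g * cfc f T' = cfc f T' * W g := by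
    intro f g
    exact StarAlgebra.elemental.le_of_mem (isClosed_commutantSub s hstar) hTmem
      (cfc_mem_elemental' T' f) _ ⟨g, rfl⟩
  -- spectrum is a singleton
  have hspec : ∀ a ∈ spectrum ℂ T', ∀ b ∈ spectrum ℂ T', a = b := by
    intro a ha b hb
    by_contra hab
    have hd : (0:ℝ) < ‖a - b‖ := by
      rw [norm_pos_iff, sub_ne_zero]; exact hab
    set d : ℝ := ‖a - b‖ with hdd
    set h : ℂ → ℂ := fun z => (((1 - 2 * ‖z - a‖ / d) ⊔ 0 : ℝ) : ℂ) with hh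
    set g : ℂ → ℂ := fun z => (((1 - 2 * ‖z - b‖ / d) ⊔ 0 : ℝ) : ℂ) with hg
    have hhc : Continuous h := by fun_prop
    have hgc : Continuous g := by fun_prop
    have hha : h a = 1 := by simp [hh]
    have hgb : g b = 1 := by simp [hg]
    have hsupp : ∀ z, h z ≠ 0 → ‖z - a‖ < d / 2 := by
      intro z hz
      by_contra hge
      push_neg at hge
      apply hz
      show (((1 - 2 * ‖z - a‖ / d) ⊔ 0 : ℝ) : ℂ) = 0
      norm_cast
      refine sup_eq_right.2 ?_
      have : (1:ℝ) ≤ 2 * ‖z - a‖ / d := by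
        rw [le_div_iff₀ hd]
        linarith
      linarith
    have hsupp' : ∀ z, g z ≠ 0 → ‖z - b‖ < d / 2 := by
      intro z hz
      by_contra hge
      push_neg at hge
      apply hz
      show (((1 - 2 * ‖z - b‖ / d) ⊔ 0 : ℝ) : ℂ) = 0
      norm_cast
      refine sup_eq_right.2 ?_
      have : (1:ℝ) ≤ 2 * ‖z - b‖ / d := by
        rw [le_div_iff₀ hd]
        linarith
      linarith
    have hdisj : ∀ z, g z * h z = 0 := by
      intro z
      by_contra hz
      have h1 := hsupp z (right_ne_zero_of_mul hz)
      have h2 := hsupp' z (left_ne_zero_of_mul hz)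
      have : ‖a - b‖ ≤ ‖z - a‖ + ‖z - b‖ := by
        calc ‖a - b‖ = ‖(z - b) - (z - a)‖ := by ring_nf
          _ ≤ ‖z - b‖ + ‖z - a‖ := norm_sub_le _ _
          _ = ‖z - a‖ + ‖z - b‖ := by ring
      rw [← hdd] at this
      linarith
    set A : H →L[ℂ] H := cfc h T' with hA
    set B : H →L[ℂ] H := cfc g T' with hB
    have hAne : A ≠ 0 := by
      intro h0
      have := cfc_map_spectrum (R := ℂ) (f := h) (a := T') (hf := hhc.continuousOn)
      rw [← hA, h0, spectrum.zero_eq] at this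
      have : h a ∈ ({0} : Set ℂ) := this ▸ ⟨a, ha, rfl⟩
      rw [hha] at this
      simp at this
    have hBne : B ≠ 0 := by
      intro h0
      have := cfc_map_spectrum (R := ℂ) (f := g) (a := T') (hf := hgc.continuousOn)
      rw [← hB, h0, spectrum.zero_eq] at this
      have : g b ∈ ({0} : Set ℂ) := this ▸ ⟨b, hb, rfl⟩
      rw [hgb] at this
      simp at this
    have hBA : B * A = 0 := by
      rw [hA, hB, ← cfc_mul g h T' hgc.continuousOn hhc.continuousOn]
      calc cfc (fun z => g z * h z) T' = cfc (fun _ : ℂ => (0:ℂ)) T' := cfc_congr fun z _ => hdisj z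
        _ = 0 := by simp
    set K : Submodule ℂ H := (LinearMap.range (A : H →ₗ[ℂ] H)).topologicalClosure with hK
    have hKclosed : IsClosed (K : Set H) := Submodule.isClosed_topologicalClosure _
    have hrangesub : ∀ gg : G, (⇑(π gg)) '' (LinearMap.range (A : H →ₗ[ℂ] H) : Set H) ⊆ (LinearMap.range (A : H →ₗ[ℂ] H) : Set H) := by
      rintro gg _ ⟨_, ⟨u, rfl⟩, rfl⟩
      refine ⟨π gg u, ?_⟩
      have := DFunLike.congr_fun (hcomm h gg) u
      simpa [hWapp, hA] using this.symm
    have hKinv : IsInvariantSubspace π K := by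
      intro gg v hv
      have hv' : v ∈ closure (LinearMap.range (A : H →ₗ[ℂ] H) : Set H) := by
        rw [← Submodule.topologicalClosure_coe]; exact hv
      have h1 : π gg v ∈ (⇑(π gg)) '' closure (LinearMap.range (A : H →ₗ[ℂ] H) : Set H) := ⟨v, hv', rfl⟩
      have h2 := image_closure_subset_closure_image (f := ⇑(π gg)) (π gg).continuous
        (s := (LinearMap.range (A : H →ₗ[ℂ] H) : Set H)) h1
      have h3 : π gg v ∈ closure (LinearMap.range (A : H →ₗ[ℂ] H) : Set H) := closure_mono (hrangesub gg) h2
      rw [← Submodule.topologicalClosure_coe] at h3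
      exact h3
    rcases hirr K hKclosed hKinv with hbot | htop
    · obtain ⟨v, hv⟩ : ∃ v, A v ≠ 0 := by
        by_contra hv
        push_neg at hv
        exact hAne (ContinuousLinearMap.ext hv)
      have : A v ∈ K := Submodule.le_topologicalClosure _ ⟨v, rfl⟩
      rw [hbot] at this
      exact hv this
    · obtain ⟨w, hw⟩ : ∃ w, B w ≠ 0 := by
        by_contra hw
        push_neg at hw
        exact hBne (ContinuousLinearMap.ext hw)
      have hwK : w ∈ K := htop ▸ Submodule.mem_top
      have hker : (LinearMap.range (A : H →ₗ[ℂ] H) : Set H) ⊆ (B.ker : Set H) := by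
        rintro _ ⟨u, rfl⟩
        have := DFunLike.congr_fun hBA u
        simpa using this
      have : (K : Set H) ⊆ (B.ker : Set H) := by
        rw [hK, Submodule.topologicalClosure_coe]
        exact closure_minimal hker (ContinuousLinearMap.isClosed_ker B)
      exact hw (this hwK)
  obtain ⟨c, hc⟩ := spectrum.nonempty T'
  refine ⟨c, fun v => ?_⟩
  have key : T' = algebraMap ℂ (H →L[ℂ] H) c := by
    have h1 : cfc (fun x : ℂ => x) T' = cfc (fun _ : ℂ => c) T' :=
      cfc_congr fun x hx => hspec x hx c hc
    rwa [cfc_id' ℂ T', cfc_const c T'] at h1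
  have h2 := DFunLike.congr_fun key v
  simpa [Algebra.algebraMap_eq_smul_one, hT'app] using h2

end SchurAux

/-- The product topology on a semidirect product of topological groups. -/
instance {N G : Type*} [Group N] [Group G] [TopologicalSpace N] [TopologicalSpace G]
    (φ : G →* MulAut N) : TopologicalSpace (N ⋊[φ] G) :=
  TopologicalSpace.induced (fun g => (g.left, g.right)) instTopologicalSpaceProd

theorem statement_10
    {N : Type} [Group N] [TopologicalSpace N] [IsTopologicalGroup N]
    {S : Type} [Group S] [TopologicalSpace S] [IsTopologicalGroup S]
    -- `S` is connected, with perfect Lie algebra (equivalently, dense commutator subgroup)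
    (hSconn : ConnectedSpace S)
    (hSperf : (commutator S).topologicalClosure = ⊤)
    (φ : S →* MulAut N)
    {H : Type} [NormedAddCommGroup H] [InnerProductSpace ℂ H] [CompleteSpace H]
    (π₁ π₂ : (N ⋊[φ] S) →* (H ≃ₗᵢ[ℂ] H))
    (hcont₁ : StronglyContinuous π₁) (hcont₂ : StronglyContinuous π₂)
    -- `π₁` and `π₂` agree on `N`
    (hagree : ∀ n : N, π₁ (SemidirectProduct.inl n) = π₂ (SemidirectProduct.inl n))
    -- `π₁|_N` is irreducible
    (hirr : IsIrreducibleRep (π₁.comp (SemidirectProduct.inl (φ := φ)))) :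
    π₁ = π₂ := by
  classical
  rcases subsingleton_or_nontrivial H with hsub | hnt
  · exact MonoidHom.ext fun g => LinearIsometryEquiv.ext fun v => Subsingleton.elim _ _
  obtain ⟨v₀, hv₀⟩ := exists_ne (0 : H)
  set inlH : N →* (N ⋊[φ] S) := SemidirectProduct.inl with hinlH
  set inrH : S →* (N ⋊[φ] S) := SemidirectProduct.inr with hinrH
  have hmul₁ : ∀ (a b : N ⋊[φ] S) (v : H), π₁ (a * b) v = π₁ a (π₁ b v) := by
    intro a b v; rw [map_mul]; rfl
  have hmul₂ : ∀ (a b : N ⋊[φ] S) (v : H), π₂ (a * b) v = π₂ a (π₂ b v) := by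
    intro a b v; rw [map_mul]; rfl
  -- for each `s`, the operator `π₂(inr s)⁻¹ π₁(inr s)` is scalar, by Schur's lemma
  have key : ∀ s : S, ∃ c : ℂ, ∀ v : H,
      π₂ (inrH s⁻¹) (π₁ (inrH s) v) = c • v := by
    intro s
    set T : H ≃ₗᵢ[ℂ] H := (π₁ (inrH s)).trans (π₂ (inrH s⁻¹)) with hTdef
    have hTapp : ∀ v, T v = π₂ (inrH s⁻¹) (π₁ (inrH s) v) := fun v => rfl
    have hgrp : ∀ n : N, inrH s * inlH n = inlH (φ s n) * inrH s := by
      intro n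
      rw [hinrH, hinlH, SemidirectProduct.inl_aut,
        mul_assoc (SemidirectProduct.inr s * SemidirectProduct.inl n), ← map_mul,
        inv_mul_cancel, map_one, mul_one]
    have hgrp2 : ∀ n : N, inrH s⁻¹ * inlH (φ s n) = inlH n * inrH s⁻¹ := by
      intro n
      rw [hinrH, hinlH]
      have := SemidirectProduct.inl_aut_inv (φ := φ) s (φ s n)
      have h2 : ((φ s)⁻¹ (φ s n)) = n := by simp
      rw [h2] at this
      rw [this, mul_assoc (SemidirectProduct.inr s⁻¹ * SemidirectProduct.inl ((φ s) n)),
        ← map_mul, mul_inv_cancel, map_one, mul_one]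
    have hcommT : ∀ (n : N) (v : H),
        T ((π₁.comp (SemidirectProduct.inl (φ := φ))) n v)
          = (π₁.comp (SemidirectProduct.inl (φ := φ))) n (T v) := by
      intro n v
      show T (π₁ (inlH n) v) = π₁ (inlH n) (T v)
      rw [hTapp, hTapp]
      rw [← hmul₁ (inrH s) (inlH n) v, hgrp n, hmul₁, hagree (φ s n)]
      rw [← hmul₂ (inrH s⁻¹) (inlH (φ s n)), hgrp2 n, hmul₂, ← hagree n]
    obtain ⟨c, hc⟩ := schur _ hirr T hcommT
    exact ⟨c, fun v => by rw [← hTapp]; exact hc v⟩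
  choose c hc using key
  have hsmul_inj : ∀ a b : ℂ, a • v₀ = b • v₀ → a = b := by
    intro a b hab
    by_contra hne
    have : (a - b) • v₀ = 0 := by rw [sub_smul, hab, sub_self]
    rcases smul_eq_zero.1 this with h | h
    · exact hne (sub_eq_zero.1 h)
    · exact hv₀ h
  have hc1 : c 1 = 1 := by
    refine hsmul_inj _ _ ?_
    rw [← hc 1 v₀]
    simp
  have hcmul : ∀ s t : S, c (s * t) = c s * c t := by
    intro s t
    refine hsmul_inj _ _ ?_
    rw [← hc (s * t) v₀]
    have h1 : π₁ (inrH (s * t)) v₀ = π₁ (inrH s) (π₁ (inrH t) v₀) := by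
      rw [map_mul]; exact hmul₁ _ _ _
    have h2 : ∀ w : H, π₂ (inrH (s * t)⁻¹) w = π₂ (inrH t⁻¹) (π₂ (inrH s⁻¹) w) := by
      intro w
      rw [show (s * t)⁻¹ = t⁻¹ * s⁻¹ by group, map_mul]
      exact hmul₂ _ _ _
    rw [h1, h2, hc s, map_smul, hc t, mul_smul]
  have hcinv : ∀ s : S, c s * c s⁻¹ = 1 := by
    intro s
    rw [← hcmul, mul_inv_cancel, hc1]
  -- the character kills the commutator subgroup
  set χ : S →* ℂˣ :=
    { toFun := fun s => ⟨c s, c s⁻¹, hcinv s, by rw [mul_comm]; exact hcinv s⟩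
      map_one' := Units.ext hc1
      map_mul' := fun s t => Units.ext (hcmul s t) } with hχ
  have hker : ∀ s ∈ commutator S, c s = 1 := by
    intro s hs
    have := Abelianization.commutator_subset_ker χ hs
    rw [MonoidHom.mem_ker] at this
    exact congrArg Units.val this
  -- the agreement set is closed and contains the commutator subgroup
  have hinr_cont : Continuous (inrH : S → N ⋊[φ] S) := by
    rw [continuous_induced_rng]
    exact continuous_const.prodMk continuous_id
  set C : Set S := {s : S | ∀ v : H, π₁ (inrH s) v = π₂ (inrH s) v} with hC
  have hCclosed : IsClosed C := by
    have : C = ⋂ v : H, {s : S | π₁ (inrH s) v = π₂ (inrH s) v} := by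
      ext s; simp [hC, Set.mem_iInter]
    rw [this]
    refine isClosed_iInter fun v => ?_
    exact isClosed_eq ((hcont₁ v).comp hinr_cont) ((hcont₂ v).comp hinr_cont)
  have hCsub : ((commutator S : Subgroup S) : Set S) ⊆ C := by
    intro s hs v
    have h1 : π₂ (inrH s⁻¹) (π₁ (inrH s) v) = v := by
      rw [hc s, hker s hs, one_smul]
    have h2 := congrArg (π₂ (inrH s)) h1
    rw [← hmul₂ (inrH s) (inrH s⁻¹)] at h2
    rw [show inrH s * inrH s⁻¹ = 1 by rw [← map_mul]; simp, map_one] at h2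
    exact h2
  have hall : ∀ s : S, ∀ v : H, π₁ (inrH s) v = π₂ (inrH s) v := by
    intro s
    have hs : s ∈ (commutator S).topologicalClosure := hSperf ▸ Subgroup.mem_top s
    have hs' : s ∈ closure ((commutator S : Subgroup S) : Set S) := hs
    exact closure_minimal hCsub hCclosed hs'
  refine MonoidHom.ext fun g => LinearIsometryEquiv.ext fun v => ?_
  rw [← SemidirectProduct.inl_left_mul_inr_right g]
  rw [hmul₁, hmul₂, hagree g.left]
  exact congrArg _ (hall g.right v)
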